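/- Let N ≥ 1, ħ ≠ 0 real, V: ℝ² → ℝ smooth, and f_{j,k}: ℝ² → ℝ smooth for 0 ≤ k ≤ N, 0 ≤ j ≤ N−k. Define X^e ψ = (1/2) Σ_{k even} Σ_{j} [ f_{j,k}·(p̂₁^j p̂₂^{N−k−j} ψ) + p̂₁^j p̂₂^{N−k−j}(f_{j,k}·ψ) ] and X^o ψ the analogous sum over odd k, so X = X^e + X^o. If X commutes with Ĥ (i.e., X(Ĥψ) = Ĥ(Xψ) for all smooth ψ: ℝ² → ℂ), then X^e and X^o each commute with Ĥ; i.e., the parts of X whose differential order has fixed parity are separately integrals of motion. -/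

import Mathlib

noncomputable section

/-- Partial derivative with respect to `x` of a complex-valued function on `ℝ²`. -/
def pdxC (f : ℝ × ℝ → ℂ) : ℝ × ℝ → ℂ := fun q => fderiv ℝ f q (1, 0)

/-- Partial derivative with respect to `y` of a complex-valued function on `ℝ²`. -/
def pdyC (f : ℝ × ℝ → ℂ) : ℝ × ℝ → ℂ := fun q => fderiv ℝ f q (0, 1)

/-- The momentum operator `p̂₁ψ = −iħ ∂ψ/∂x`. -/
def P1 (hbar : ℝ) (ψ : ℝ × ℝ → ℂ) : ℝ × ℝ → ℂ := fun q =>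
  -Complex.I * (hbar : ℂ) * pdxC ψ q

/-- The momentum operator `p̂₂ψ = −iħ ∂ψ/∂y`. -/
def P2 (hbar : ℝ) (ψ : ℝ × ℝ → ℂ) : ℝ × ℝ → ℂ := fun q =>
  -Complex.I * (hbar : ℂ) * pdyC ψ q

/-- The quantum Hamiltonian `Ĥψ = −ħ²(ψ_xx + ψ_yy) + V ψ`. -/
def Hop (hbar : ℝ) (V : ℝ × ℝ → ℝ) (ψ : ℝ × ℝ → ℂ) : ℝ × ℝ → ℂ := fun q =>
  -(hbar : ℂ) ^ 2 * (pdxC (pdxC ψ) q + pdyC (pdyC ψ) q) + (V q : ℂ) * ψ q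

/-- The sub-sum of the symmetrized quantum integral with `k` ranging over a set `s`:
`(1/2) Σ_{k ∈ s} Σ_j [f_{j,k}·(p̂₁^j p̂₂^{N−k−j} ψ) + p̂₁^j p̂₂^{N−k−j}(f_{j,k}·ψ)]`. -/
def XopS (N : ℕ) (hbar : ℝ) (f : ℕ → ℕ → ℝ × ℝ → ℝ) (s : Finset ℕ)
    (ψ : ℝ × ℝ → ℂ) : ℝ × ℝ → ℂ := fun q =>
  (1 / 2) * ∑ k ∈ s, ∑ j ∈ Finset.range (N - k + 1),
    ((f j k q : ℂ) * ((P1 hbar)^[j] ((P2 hbar)^[N - k - j] ψ)) q +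
      ((P1 hbar)^[j] ((P2 hbar)^[N - k - j] (fun p => (f j k p : ℂ) * ψ p))) q)

section helpers

variable {hbar : ℝ}

lemma pdxC_neg (g : ℝ × ℝ → ℂ) (q : ℝ × ℝ) : pdxC (fun p => -g p) q = -pdxC g q := by
  simp [pdxC, fderiv_neg]

lemma pdyC_neg (g : ℝ × ℝ → ℂ) (q : ℝ × ℝ) : pdyC (fun p => -g p) q = -pdyC g q := by
  simp [pdyC, fderiv_neg]

lemma pdxC_conj (g : ℝ × ℝ → ℂ) (q : ℝ × ℝ) :
    pdxC (fun p => starRingEnd ℂ (g p)) q = starRingEnd ℂ (pdxC g q) := by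
  have h : (fun p => starRingEnd ℂ (g p)) = (Complex.conjCLE : ℂ ≃L[ℝ] ℂ) ∘ g := rfl
  rw [pdxC, h, Complex.conjCLE.comp_fderiv]
  rfl

lemma pdyC_conj (g : ℝ × ℝ → ℂ) (q : ℝ × ℝ) :
    pdyC (fun p => starRingEnd ℂ (g p)) q = starRingEnd ℂ (pdyC g q) := by
  have h : (fun p => starRingEnd ℂ (g p)) = (Complex.conjCLE : ℂ ≃L[ℝ] ℂ) ∘ g := rfl
  rw [pdyC, h, Complex.conjCLE.comp_fderiv]
  rfl

lemma pdxC_add {u v : ℝ × ℝ → ℂ} {q : ℝ × ℝ} (hu : DifferentiableAt ℝ u q)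
    (hv : DifferentiableAt ℝ v q) :
    pdxC (fun p => u p + v p) q = pdxC u q + pdxC v q := by
  simp [pdxC, fderiv_fun_add hu hv]

lemma pdyC_add {u v : ℝ × ℝ → ℂ} {q : ℝ × ℝ} (hu : DifferentiableAt ℝ u q)
    (hv : DifferentiableAt ℝ v q) :
    pdyC (fun p => u p + v p) q = pdyC u q + pdyC v q := by
  simp [pdyC, fderiv_fun_add hu hv]

lemma P1_neg (g : ℝ × ℝ → ℂ) : P1 hbar (fun p => -g p) = fun q => -(P1 hbar g q) := by
  funext q; simp [P1, pdxC_neg]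

lemma P2_neg (g : ℝ × ℝ → ℂ) : P2 hbar (fun p => -g p) = fun q => -(P2 hbar g q) := by
  funext q; simp [P2, pdyC_neg]

lemma P1_conj (g : ℝ × ℝ → ℂ) :
    P1 hbar (fun p => starRingEnd ℂ (g p)) = fun q => starRingEnd ℂ (-(P1 hbar g q)) := by
  funext q
  simp only [P1, pdxC_conj, map_neg, map_mul, Complex.conj_I, Complex.conj_ofReal, neg_neg,
    neg_mul]

lemma P2_conj (g : ℝ × ℝ → ℂ) :
    P2 hbar (fun p => starRingEnd ℂ (g p)) = fun q => starRingEnd ℂ (-(P2 hbar g q)) := by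
  funext q
  simp only [P2, pdyC_conj, map_neg, map_mul, Complex.conj_I, Complex.conj_ofReal, neg_neg,
    neg_mul]

lemma P1_iter_neg (j : ℕ) (g : ℝ × ℝ → ℂ) :
    (P1 hbar)^[j] (fun p => -g p) = fun q => -((P1 hbar)^[j] g q) := by
  induction j generalizing g with
  | zero => simp
  | succ j ih =>
    rw [Function.iterate_succ_apply, Function.iterate_succ_apply, P1_neg, ih]

lemma P2_iter_neg (j : ℕ) (g : ℝ × ℝ → ℂ) :
    (P2 hbar)^[j] (fun p => -g p) = fun q => -((P2 hbar)^[j] g q) := by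
  induction j generalizing g with
  | zero => simp
  | succ j ih =>
    rw [Function.iterate_succ_apply, Function.iterate_succ_apply, P2_neg, ih]

lemma P1_iter_conj (j : ℕ) (g : ℝ × ℝ → ℂ) :
    (P1 hbar)^[j] (fun p => starRingEnd ℂ (g p)) =
      fun q => (-1 : ℂ) ^ j * starRingEnd ℂ ((P1 hbar)^[j] g q) := by
  induction j generalizing g with
  | zero => simp
  | succ j ih =>
    rw [Function.iterate_succ_apply, Function.iterate_succ_apply, P1_conj]
    have h2 : (fun q => starRingEnd ℂ (-(P1 hbar g q))) =
        fun q => starRingEnd ℂ ((fun p => -(P1 hbar g p)) q) := rfl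
    rw [h2, ih, P1_iter_neg]
    funext q
    simp [pow_succ]

lemma P2_iter_conj (j : ℕ) (g : ℝ × ℝ → ℂ) :
    (P2 hbar)^[j] (fun p => starRingEnd ℂ (g p)) =
      fun q => (-1 : ℂ) ^ j * starRingEnd ℂ ((P2 hbar)^[j] g q) := by
  induction j generalizing g with
  | zero => simp
  | succ j ih =>
    rw [Function.iterate_succ_apply, Function.iterate_succ_apply, P2_conj]
    have h2 : (fun q => starRingEnd ℂ (-(P2 hbar g q))) =
        fun q => starRingEnd ℂ ((fun p => -(P2 hbar g p)) q) := rfl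
    rw [h2, ih, P2_iter_neg]
    funext q
    simp [pow_succ]

lemma P1_iter_sign {c : ℂ} (hc : c = 1 ∨ c = -1) (j : ℕ) (g : ℝ × ℝ → ℂ) :
    (P1 hbar)^[j] (fun p => c * g p) = fun q => c * (P1 hbar)^[j] g q := by
  rcases hc with h | h <;> subst h
  · simp
  · have := P1_iter_neg (hbar := hbar) j g
    simp only [neg_one_mul]
    exact this

lemma neg_one_pow_cases (m : ℕ) : ((-1 : ℂ) ^ m = 1) ∨ ((-1 : ℂ) ^ m = -1) := by
  rcases Nat.even_or_odd m with h | h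
  · exact Or.inl h.neg_one_pow
  · exact Or.inr h.neg_one_pow

lemma P12_iter_conj (j m : ℕ) (g : ℝ × ℝ → ℂ) :
    (P1 hbar)^[j] ((P2 hbar)^[m] (fun p => starRingEnd ℂ (g p))) =
      fun q => (-1 : ℂ) ^ (j + m) * starRingEnd ℂ ((P1 hbar)^[j] ((P2 hbar)^[m] g) q) := by
  rw [P2_iter_conj]
  have h1 : (fun q => (-1 : ℂ) ^ m * starRingEnd ℂ ((P2 hbar)^[m] g q)) =
      fun q => (-1 : ℂ) ^ m * (fun p => starRingEnd ℂ ((P2 hbar)^[m] g p)) q := rfl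
  rw [h1, P1_iter_sign (neg_one_pow_cases m), P1_iter_conj]
  funext q
  rw [pow_add]
  ring

lemma Hop_conj (V : ℝ × ℝ → ℝ) (ψ : ℝ × ℝ → ℂ) :
    Hop hbar V (fun p => starRingEnd ℂ (ψ p)) = fun q => starRingEnd ℂ (Hop hbar V ψ q) := by
  funext q
  have h1 : pdxC (fun p => starRingEnd ℂ (ψ p)) = fun p => starRingEnd ℂ (pdxC ψ p) :=
    funext (pdxC_conj ψ)
  have h2 : pdyC (fun p => starRingEnd ℂ (ψ p)) = fun p => starRingEnd ℂ (pdyC ψ p) :=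
    funext (pdyC_conj ψ)
  simp only [Hop, h1, h2, pdxC_conj, pdyC_conj, map_add, map_mul, map_neg, map_pow,
    Complex.conj_ofReal]

lemma Hop_neg (V : ℝ × ℝ → ℝ) (ψ : ℝ × ℝ → ℂ) :
    Hop hbar V (fun p => -ψ p) = fun q => -(Hop hbar V ψ q) := by
  funext q
  have h1 : pdxC (fun p => -ψ p) = fun p => -(pdxC ψ p) := funext (pdxC_neg ψ)
  have h2 : pdyC (fun p => -ψ p) = fun p => -(pdyC ψ p) := funext (pdyC_neg ψ)
  simp only [Hop, h1, h2, pdxC_neg, pdyC_neg]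
  ring

lemma Hop_sign {c : ℂ} (hc : c = 1 ∨ c = -1) (V : ℝ × ℝ → ℝ) (ψ : ℝ × ℝ → ℂ) :
    Hop hbar V (fun p => c * ψ p) = fun q => c * Hop hbar V ψ q := by
  rcases hc with h | h <;> subst h
  · simp
  · have := Hop_neg (hbar := hbar) V ψ
    simp only [neg_one_mul]
    exact this

lemma contDiff_pdxC {g : ℝ × ℝ → ℂ} (hg : ContDiff ℝ (⊤ : ℕ∞) g) :
    ContDiff ℝ (⊤ : ℕ∞) (pdxC g) := by
  have h := hg.fderiv_right (m := (⊤ : ℕ∞)) (by simp)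
  exact h.clm_apply contDiff_const

lemma contDiff_pdyC {g : ℝ × ℝ → ℂ} (hg : ContDiff ℝ (⊤ : ℕ∞) g) :
    ContDiff ℝ (⊤ : ℕ∞) (pdyC g) := by
  have h := hg.fderiv_right (m := (⊤ : ℕ∞)) (by simp)
  exact h.clm_apply contDiff_const

lemma contDiff_P1 {g : ℝ × ℝ → ℂ} (hg : ContDiff ℝ (⊤ : ℕ∞) g) :
    ContDiff ℝ (⊤ : ℕ∞) (P1 hbar g) :=
  contDiff_const.mul (contDiff_pdxC hg)

lemma contDiff_P2 {g : ℝ × ℝ → ℂ} (hg : ContDiff ℝ (⊤ : ℕ∞) g) :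
    ContDiff ℝ (⊤ : ℕ∞) (P2 hbar g) :=
  contDiff_const.mul (contDiff_pdyC hg)

lemma contDiff_P1_iter (j : ℕ) {g : ℝ × ℝ → ℂ} (hg : ContDiff ℝ (⊤ : ℕ∞) g) :
    ContDiff ℝ (⊤ : ℕ∞) ((P1 hbar)^[j] g) := by
  induction j generalizing g with
  | zero => simpa using hg
  | succ j ih =>
    rw [Function.iterate_succ_apply]
    exact ih (contDiff_P1 hg)

lemma contDiff_P2_iter (j : ℕ) {g : ℝ × ℝ → ℂ} (hg : ContDiff ℝ (⊤ : ℕ∞) g) :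
    ContDiff ℝ (⊤ : ℕ∞) ((P2 hbar)^[j] g) := by
  induction j generalizing g with
  | zero => simpa using hg
  | succ j ih =>
    rw [Function.iterate_succ_apply]
    exact ih (contDiff_P2 hg)

lemma contDiff_ofReal {g : ℝ × ℝ → ℝ} (hg : ContDiff ℝ (⊤ : ℕ∞) g) :
    ContDiff ℝ (⊤ : ℕ∞) (fun q => (g q : ℂ)) :=
  Complex.ofRealCLM.contDiff.comp hg

lemma contDiff_XopS (N : ℕ) (f : ℕ → ℕ → ℝ × ℝ → ℝ)
    (hf : ∀ j k, ContDiff ℝ (⊤ : ℕ∞) (f j k)) (s : Finset ℕ)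
    {ψ : ℝ × ℝ → ℂ} (hψ : ContDiff ℝ (⊤ : ℕ∞) ψ) :
    ContDiff ℝ (⊤ : ℕ∞) (XopS N hbar f s ψ) := by
  unfold XopS
  apply ContDiff.mul contDiff_const
  apply ContDiff.sum
  intro k _
  apply ContDiff.sum
  intro j _
  apply ContDiff.add
  · exact (contDiff_ofReal (hf j k)).mul (contDiff_P1_iter j (contDiff_P2_iter _ hψ))
  · exact contDiff_P1_iter j (contDiff_P2_iter _ ((contDiff_ofReal (hf j k)).mul hψ))

lemma Hop_add (V : ℝ × ℝ → ℝ) {u v : ℝ × ℝ → ℂ} (hu : ContDiff ℝ (⊤ : ℕ∞) u)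
    (hv : ContDiff ℝ (⊤ : ℕ∞) v) (q : ℝ × ℝ) :
    Hop hbar V (fun p => u p + v p) q = Hop hbar V u q + Hop hbar V v q := by
  have hx : pdxC (fun p => u p + v p) = fun p => pdxC u p + pdxC v p := by
    funext p
    exact pdxC_add (hu.differentiable (by simp) p) (hv.differentiable (by simp) p)
  have hy : pdyC (fun p => u p + v p) = fun p => pdyC u p + pdyC v p := by
    funext p
    exact pdyC_add (hu.differentiable (by simp) p) (hv.differentiable (by simp) p)
  have hxx : pdxC (pdxC (fun p => u p + v p)) q = pdxC (pdxC u) q + pdxC (pdxC v) q := by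
    rw [hx]
    exact pdxC_add ((contDiff_pdxC hu).differentiable (by simp) q)
      ((contDiff_pdxC hv).differentiable (by simp) q)
  have hyy : pdyC (pdyC (fun p => u p + v p)) q = pdyC (pdyC u) q + pdyC (pdyC v) q := by
    rw [hy]
    exact pdyC_add ((contDiff_pdyC hu).differentiable (by simp) q)
      ((contDiff_pdyC hv).differentiable (by simp) q)
  simp only [Hop, hxx, hyy]
  ring

lemma XopS_conj (N : ℕ) (f : ℕ → ℕ → ℝ × ℝ → ℝ) (s : Finset ℕ)
    (hs : ∀ k ∈ s, k ≤ N) (ε : ℂ) (hε : ∀ k ∈ s, (-1 : ℂ) ^ (N - k) = ε)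
    (ψ : ℝ × ℝ → ℂ) (q : ℝ × ℝ) :
    XopS N hbar f s (fun p => starRingEnd ℂ (ψ p)) q =
      ε * starRingEnd ℂ (XopS N hbar f s ψ q) := by
  have h12 : starRingEnd ℂ (1 / 2 : ℂ) = 1 / 2 := by
    rw [show (1/2 : ℂ) = ((1/2 : ℝ) : ℂ) by norm_num, Complex.conj_ofReal]
  unfold XopS
  rw [map_mul, h12]
  simp only [map_sum, Finset.mul_sum]
  apply Finset.sum_congr rfl
  intro k hk
  apply Finset.sum_congr rfl
  intro j hj
  have hjk : j ≤ N - k := Nat.lt_succ_iff.mp (Finset.mem_range.mp hj)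
  have hadd : j + (N - k - j) = N - k := Nat.add_sub_cancel' hjk
  have hsign : (-1 : ℂ) ^ (j + (N - k - j)) = ε := by rw [hadd]; exact hε k hk
  have hfconj : (fun p => (f j k p : ℂ) * (fun r => starRingEnd ℂ (ψ r)) p) =
      fun p => starRingEnd ℂ ((f j k p : ℂ) * ψ p) := by
    funext p
    simp only [map_mul, Complex.conj_ofReal]
  rw [hfconj, P12_iter_conj, P12_iter_conj, hsign, map_add, map_mul, Complex.conj_ofReal]
  ring

lemma Hop_sub (V : ℝ × ℝ → ℝ) {u v : ℝ × ℝ → ℂ} (hu : ContDiff ℝ (⊤ : ℕ∞) u)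
    (hv : ContDiff ℝ (⊤ : ℕ∞) v) (q : ℝ × ℝ) :
    Hop hbar V (fun p => u p - v p) q = Hop hbar V u q - Hop hbar V v q := by
  have h1 : (fun p => u p - v p) = fun p => u p + (fun r => -v r) p := by
    funext p; ring
  rw [h1, Hop_add V hu hv.neg q]
  have h2 : Hop hbar V (fun r => -v r) q = -(Hop hbar V v q) := by
    rw [Hop_neg]
  rw [h2]
  ring

end helpers

/-- if the symmetrized quantum integral `X = X^e + X^o` commutes with `Ĥ`
on smooth functions, then the even part `X^e` (sum over even `k`) and the odd part `X^o`
(sum over odd `k`) each commute with `Ĥ`. -/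
theorem stmt_12 (N : ℕ) (hN : 1 ≤ N) (hbar : ℝ) (hb : hbar ≠ 0)
    (V : ℝ × ℝ → ℝ) (hV : ContDiff ℝ (⊤ : ℕ∞) V)
    (f : ℕ → ℕ → ℝ × ℝ → ℝ) (hf : ∀ j k, ContDiff ℝ (⊤ : ℕ∞) (f j k))
    (hcomm : ∀ ψ : ℝ × ℝ → ℂ, ContDiff ℝ (⊤ : ℕ∞) ψ → ∀ q : ℝ × ℝ,
      XopS N hbar f (Finset.range (N + 1)) (Hop hbar V ψ) q =
        Hop hbar V (XopS N hbar f (Finset.range (N + 1)) ψ) q) :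
    (∀ ψ : ℝ × ℝ → ℂ, ContDiff ℝ (⊤ : ℕ∞) ψ → ∀ q : ℝ × ℝ,
        XopS N hbar f ((Finset.range (N + 1)).filter (fun k => Even k)) (Hop hbar V ψ) q =
          Hop hbar V (XopS N hbar f ((Finset.range (N + 1)).filter (fun k => Even k)) ψ) q) ∧
    (∀ ψ : ℝ × ℝ → ℂ, ContDiff ℝ (⊤ : ℕ∞) ψ → ∀ q : ℝ × ℝ,
        XopS N hbar f ((Finset.range (N + 1)).filter (fun k => Odd k)) (Hop hbar V ψ) q =
          Hop hbar V (XopS N hbar f ((Finset.range (N + 1)).filter (fun k => Odd k)) ψ) q) := by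
  set E : Finset ℕ := (Finset.range (N + 1)).filter (fun k => Even k) with hE
  set O : Finset ℕ := (Finset.range (N + 1)).filter (fun k => Odd k) with hO
  have hEle : ∀ k ∈ E, k ≤ N := fun k hk =>
    Nat.lt_succ_iff.mp (Finset.mem_range.mp (Finset.mem_filter.mp hk).1)
  have hOle : ∀ k ∈ O, k ≤ N := fun k hk =>
    Nat.lt_succ_iff.mp (Finset.mem_range.mp (Finset.mem_filter.mp hk).1)
  have hεE : ∀ k ∈ E, (-1 : ℂ) ^ (N - k) = (-1 : ℂ) ^ N := by
    intro k hk
    have hke : Even k := (Finset.mem_filter.mp hk).2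
    have h := hEle k hk
    have : (-1 : ℂ) ^ (N - k) * (-1 : ℂ) ^ k = (-1 : ℂ) ^ N := by
      rw [← pow_add, Nat.sub_add_cancel h]
    rw [hke.neg_one_pow, mul_one] at this
    exact this
  have hεO : ∀ k ∈ O, (-1 : ℂ) ^ (N - k) = -(-1 : ℂ) ^ N := by
    intro k hk
    have hko : Odd k := (Finset.mem_filter.mp hk).2
    have h := hOle k hk
    have : (-1 : ℂ) ^ (N - k) * (-1 : ℂ) ^ k = (-1 : ℂ) ^ N := by
      rw [← pow_add, Nat.sub_add_cancel h]
    rw [hko.neg_one_pow, mul_neg_one] at this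
    linear_combination -this
  -- splitting of the full sum
  have hsplit : ∀ (ψ : ℝ × ℝ → ℂ) (q : ℝ × ℝ),
      XopS N hbar f (Finset.range (N + 1)) ψ q = XopS N hbar f E ψ q + XopS N hbar f O ψ q := by
    intro ψ q
    unfold XopS
    rw [← Finset.sum_filter_add_sum_filter_not (Finset.range (N + 1)) (fun k => Even k)]
    have hnot : (Finset.range (N + 1)).filter (fun k => ¬ Even k) = O := by
      rw [hO]
      apply Finset.filter_congr
      intro k _
      exact Nat.not_even_iff_odd
    rw [hnot, ← hE]
    ring
  have key : ∀ ψ : ℝ × ℝ → ℂ, ContDiff ℝ (⊤ : ℕ∞) ψ → ∀ q : ℝ × ℝ,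
      XopS N hbar f E (Hop hbar V ψ) q = Hop hbar V (XopS N hbar f E ψ) q ∧
      XopS N hbar f O (Hop hbar V ψ) q = Hop hbar V (XopS N hbar f O ψ) q := by
    intro ψ hψ q
    have hXE := contDiff_XopS (hbar := hbar) N f hf E hψ
    have hXO := contDiff_XopS (hbar := hbar) N f hf O hψ
    -- Equation 1
    have eq1 : XopS N hbar f E (Hop hbar V ψ) q + XopS N hbar f O (Hop hbar V ψ) q =
        Hop hbar V (XopS N hbar f E ψ) q + Hop hbar V (XopS N hbar f O ψ) q := by
      have h := hcomm ψ hψ q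
      rw [hsplit (Hop hbar V ψ) q] at h
      have hfun : XopS N hbar f (Finset.range (N + 1)) ψ =
          fun p => XopS N hbar f E ψ p + XopS N hbar f O ψ p := funext (hsplit ψ)
      rw [hfun, Hop_add V hXE hXO q] at h
      exact h
    -- Equation 2, via conjugation
    have hψc : ContDiff ℝ (⊤ : ℕ∞) (fun p => starRingEnd ℂ (ψ p)) := by
      have : (fun p => starRingEnd ℂ (ψ p)) = (Complex.conjCLE : ℂ ≃L[ℝ] ℂ) ∘ ψ := rfl
      rw [this]
      exact (Complex.conjCLE : ℂ ≃L[ℝ] ℂ).toContinuousLinearMap.contDiff.comp hψ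
    have h2 := hcomm (fun p => starRingEnd ℂ (ψ p)) hψc q
    have hHc : Hop hbar V (fun p => starRingEnd ℂ (ψ p)) =
        fun p => starRingEnd ℂ (Hop hbar V ψ p) := Hop_conj V ψ
    -- LHS of h2
    have hL : XopS N hbar f (Finset.range (N + 1))
        (Hop hbar V (fun p => starRingEnd ℂ (ψ p))) q =
        (-1 : ℂ) ^ N * starRingEnd ℂ (XopS N hbar f E (Hop hbar V ψ) q)
          - (-1 : ℂ) ^ N * starRingEnd ℂ (XopS N hbar f O (Hop hbar V ψ) q) := by
      rw [hHc, hsplit, XopS_conj N f E hEle ((-1 : ℂ) ^ N) hεE,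
        XopS_conj N f O hOle (-(-1 : ℂ) ^ N) hεO]
      ring
    -- RHS of h2
    have hXc : XopS N hbar f (Finset.range (N + 1)) (fun p => starRingEnd ℂ (ψ p)) =
        fun p => (-1 : ℂ) ^ N * starRingEnd ℂ
          ((fun r => XopS N hbar f E ψ r - XopS N hbar f O ψ r) p) := by
      funext p
      rw [hsplit, XopS_conj N f E hEle ((-1 : ℂ) ^ N) hεE,
        XopS_conj N f O hOle (-(-1 : ℂ) ^ N) hεO]
      simp only [map_sub]
      ring
    have hR : Hop hbar V (XopS N hbar f (Finset.range (N + 1))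
        (fun p => starRingEnd ℂ (ψ p))) q =
        (-1 : ℂ) ^ N * starRingEnd ℂ
          (Hop hbar V (XopS N hbar f E ψ) q - Hop hbar V (XopS N hbar f O ψ) q) := by
      rw [hXc, Hop_sign (neg_one_pow_cases N), Hop_conj]
      beta_reduce
      rw [Hop_sub V hXE hXO q]
    rw [hL, hR] at h2
    -- deduce: conj applied stuff ⇒ eq2
    have eq2 : XopS N hbar f E (Hop hbar V ψ) q - XopS N hbar f O (Hop hbar V ψ) q =
        Hop hbar V (XopS N hbar f E ψ) q - Hop hbar V (XopS N hbar f O ψ) q := by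
      have hne : ((-1 : ℂ) ^ N) ≠ 0 := by
        rcases neg_one_pow_cases N with h | h <;> rw [h] <;> norm_num
      have h3 : starRingEnd ℂ (XopS N hbar f E (Hop hbar V ψ) q)
          - starRingEnd ℂ (XopS N hbar f O (Hop hbar V ψ) q) =
          starRingEnd ℂ (Hop hbar V (XopS N hbar f E ψ) q
            - Hop hbar V (XopS N hbar f O ψ) q) :=
        mul_left_cancel₀ hne (by linear_combination h2)
      rw [← map_sub] at h3
      exact (starRingEnd ℂ).injective h3
    constructor
    · linear_combination (eq1 + eq2) / 2
    · linear_combination (eq1 - eq2) / 2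
  exact ⟨fun ψ hψ q => (key ψ hψ q).1, fun ψ hψ q => (key ψ hψ q).2⟩
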